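/- Let a₁,…,a_j ∈ [m-1] ⊆ [n]. Then the events {descents at all of a₁,…,a_j} and {descents at all of m+1,…,n} are independent for uniformly random (ω,τ) ∈ 𝔖_{n,r}: E[X_{a₁}⋯X_{a_j}·X_{m+1}X_{m+2}⋯X_n] = E[X_{a₁}⋯X_{a_j}] · E[X_{m+1}⋯X_n]. -/

import Mathlib

open scoped Classical BigOperators

namespace ColoredPerm

/-- A colored permutation: a pair of a permutation of `Fin n` and a coloring. -/
abbrev CP (n r : ℕ) := Equiv.Perm (Fin n) × (Fin n → ZMod r)

/-- Index `i : Fin n` represents position `i+1 ∈ [n]`.  Descent at position `i+1`. -/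
def IsDescent {n r : ℕ} (σ : CP n r) (i : Fin n) : Prop :=
  if h : (i : ℕ) + 1 < n then
    (σ.2 ⟨(i : ℕ) + 1, h⟩).val < (σ.2 i).val ∨
      (σ.2 i = σ.2 ⟨(i : ℕ) + 1, h⟩ ∧ σ.1 ⟨(i : ℕ) + 1, h⟩ < σ.1 i)
  else (σ.2 i).val ≠ 0

/-- Descent indicator. -/
noncomputable def X {n r : ℕ} (i : Fin n) (σ : CP n r) : ℚ :=
  if IsDescent σ i then 1 else 0

/-- Color indicator `Y_{i,c}`. -/
noncomputable def Y {n r : ℕ} (i : Fin n) (c : ZMod r) (σ : CP n r) : ℚ :=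
  if σ.2 i = c then 1 else 0

noncomputable def des {n r : ℕ} (σ : CP n r) : ℕ :=
  (Finset.univ.filter (fun i => IsDescent σ i)).card

/-- Major index: sum of descent positions lying in `[n-1]`. -/
noncomputable def maj {n r : ℕ} (σ : CP n r) : ℕ :=
  ∑ i ∈ Finset.univ.filter (fun i : Fin n => IsDescent σ i ∧ (i : ℕ) + 1 < n),
    ((i : ℕ) + 1)

def col {n r : ℕ} (σ : CP n r) : ℕ := ∑ i, (σ.2 i).val

noncomputable def fmaj {n r : ℕ} (σ : CP n r) : ℕ := r * maj σ + col σ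

/-- Ordinary descent of a permutation of `Fin n` at position `i+1` (no descent at last position). -/
def IsDescentS {n : ℕ} (w : Equiv.Perm (Fin n)) (i : Fin n) : Prop :=
  if h : (i : ℕ) + 1 < n then w ⟨(i : ℕ) + 1, h⟩ < w i else False

noncomputable def XS {n : ℕ} (i : Fin n) (w : Equiv.Perm (Fin n)) : ℚ :=
  if IsDescentS w i then 1 else 0

noncomputable def majS {n : ℕ} (w : Equiv.Perm (Fin n)) : ℕ :=
  ∑ i ∈ Finset.univ.filter (fun i : Fin n => IsDescentS w i ∧ (i : ℕ) + 1 < n),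
    ((i : ℕ) + 1)

/-- Expectation of `f` under the uniform distribution on a finite set `S`. -/
noncomputable def E {α : Type*} (S : Finset α) (f : α → ℚ) : ℚ :=
  (∑ x ∈ S, f x) / S.card

/-- Group multiplication of the wreath product `ℤ_r ≀ 𝔖_n`. -/
def cmul {n r : ℕ} (x y : CP n r) : CP n r :=
  (x.1 * y.1, fun i => x.2 (y.1 i) + y.2 i)

/-- Inverse in the wreath product. -/
def cinv {n r : ℕ} (x : CP n r) : CP n r :=
  (x.1⁻¹, fun i => - x.2 (x.1⁻¹ i))

/-- Conjugacy in the colored permutation group. -/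
def IsConjCP {n r : ℕ} (x y : CP n r) : Prop :=
  ∃ g : CP n r, cmul (cmul g x) (cinv g) = y

/-- The elements in the same cycle of `σ` as `i`. -/
noncomputable def cycleSet {n r : ℕ} (σ : CP n r) (i : Fin n) : Finset (Fin n) :=
  Finset.univ.filter (fun x => σ.1.SameCycle i x)

/-- The number of cycles of `σ` of length `ℓ` whose colors sum to `j`. -/
noncomputable def cycleCount {n r : ℕ} (σ : CP n r) (ℓ : ℕ) (j : ZMod r) : ℕ :=
  (Finset.univ.filter (fun i : Fin n =>
      (cycleSet σ i).card = ℓ ∧ (∑ x ∈ cycleSet σ i, σ.2 x) = j)).card / ℓ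

/-- `σ` has no cycle of length `ℓ`. -/
def NoCycleOfLength {n r : ℕ} (σ : CP n r) (ℓ : ℕ) : Prop :=
  ∀ i : Fin n, (cycleSet σ i).card ≠ ℓ

/-- `C` is a conjugacy class of `𝔖_{n,r}`. -/
def IsConjClass {n r : ℕ} [NeZero r] (C : Finset (CP n r)) : Prop :=
  ∃ σ₀ : CP n r, C = Finset.univ.filter (fun σ => IsConjCP σ₀ σ)

/-- `C` has no cycles of lengths `1, 2, …, m`. -/
def NoShortCycles {n r : ℕ} (C : Finset (CP n r)) (m : ℕ) : Prop :=
  ∀ σ ∈ C, ∀ ℓ, 1 ≤ ℓ → ℓ ≤ m → NoCycleOfLength σ ℓ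

/-- The relation identifying `a_i` with `a_i + 1` (on indices: `a i` with the index of
value `(a i) + 1`, when it exists). -/
def adjRel {n k : ℕ} (a : Fin k → Fin n) (p q : Fin n) : Prop :=
  (∃ i, a i = p) ∧ (q : ℕ) = (p : ℕ) + 1

/-- Being in the same block induced by `a`. -/
def SameBlock {n k : ℕ} (a : Fin k → Fin n) (p q : Fin n) : Prop :=
  Relation.EqvGen (adjRel a) p q

/-- The block containing `p`. -/
noncomputable def blockOf {n k : ℕ} (a : Fin k → Fin n) (p : Fin n) : Finset (Fin n) :=
  Finset.univ.filter (fun q => SameBlock a p q)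

/-- The set of blocks induced by `a`. -/
noncomputable def blocks {n k : ℕ} (a : Fin k → Fin n) : Finset (Finset (Fin n)) :=
  Finset.univ.image (blockOf a)

/-- `∏_i 1/|𝓑_i|!` over the blocks induced by `a`. -/
noncomputable def blockProd {n k : ℕ} (a : Fin k → Fin n) : ℚ :=
  ∏ b ∈ blocks a, (1 : ℚ) / (Nat.factorial b.card)

end ColoredPerm

namespace ColoredPerm

noncomputable def ER {α : Type*} (S : Finset α) (f : α → ℝ) : ℝ :=
  (∑ x ∈ S, f x) / S.card

noncomputable def XR {n r : ℕ} (i : Fin n) (σ : CP n r) : ℝ :=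
  if IsDescent σ i then 1 else 0

noncomputable def XSR {n : ℕ} (i : Fin n) (w : Equiv.Perm (Fin n)) : ℝ :=
  if IsDescentS w i then 1 else 0

end ColoredPerm


namespace ColoredPerm



/-- Right action of a position permutation. -/
def act {n r : ℕ} (σ : CP n r) (π : Equiv.Perm (Fin n)) : CP n r :=
  (σ.1 * π, fun i => σ.2 (π i))

def actEquiv {n r : ℕ} (π : Equiv.Perm (Fin n)) : CP n r ≃ CP n r where
  toFun σ := act σ π
  invFun σ := act σ π⁻¹
  left_inv σ := by
    obtain ⟨w, c⟩ := σ
    simp [act, mul_assoc]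
  right_inv σ := by
    obtain ⟨w, c⟩ := σ
    simp [act, mul_assoc]

lemma sum_act {n r : ℕ} [NeZero r] (π : Equiv.Perm (Fin n)) (h : CP n r → ℚ) :
    ∑ σ : CP n r, h (act σ π) = ∑ σ : CP n r, h σ :=
  Equiv.sum_comp (actEquiv π) h

lemma exists_orderPerm {k n : ℕ} (ι : Fin k → Fin n) (hι : Function.Injective ι)
    (w : Equiv.Perm (Fin n)) :
    ∃ u : Equiv.Perm (Fin k), ∀ p q, u p < u q ↔ w (ι p) < w (ι q) := by
  classical
  set S : Finset (Fin n) := Finset.univ.image (fun p => w (ι p)) with hS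
  have hcard : S.card = k := by
    have hinj : Function.Injective (fun p => w (ι p)) := fun p q hpq => hι (w.injective hpq)
    rw [hS, Finset.card_image_of_injective _ hinj, Finset.card_univ, Fintype.card_fin]
  set oi := S.orderIsoOfFin hcard with hoi
  have hmem : ∀ p : Fin k, w (ι p) ∈ S := fun p => by
    rw [hS]; exact Finset.mem_image_of_mem _ (Finset.mem_univ p)
  set v : Fin k → Fin k := fun p => oi.symm ⟨w (ι p), hmem p⟩ with hv
  have hinj : Function.Injective v := by
    intro p q h
    have h2 := congrArg oi h
    simp only [hv, OrderIso.apply_symm_apply, Subtype.mk.injEq] at h2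
    exact hι (w.injective h2)
  refine ⟨Equiv.ofBijective v (Finite.injective_iff_bijective.mp hinj), fun p q => ?_⟩
  show v p < v q ↔ _
  rw [← oi.lt_iff_lt]
  simp [hv, Subtype.mk_lt_mk]

lemma exists_patternPerm {k n : ℕ} (ι : Fin k → Fin n) (hι : Function.Injective ι)
    (w w₂ : Equiv.Perm (Fin n)) :
    ∃ u : Equiv.Perm (Fin k),
      ∀ p q, w (ι p) < w (ι q) ↔ w₂ (ι (u p)) < w₂ (ι (u q)) := by
  obtain ⟨u₁, hu₁⟩ := exists_orderPerm ι hι w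
  obtain ⟨u₂, hu₂⟩ := exists_orderPerm ι hι w₂
  refine ⟨u₁.trans u₂.symm, fun p q => ?_⟩
  rw [← hu₂]
  simp only [Equiv.trans_apply, Equiv.apply_symm_apply]
  exact (hu₁ p q).symm

lemma phi_const {n r k : ℕ} [NeZero r] (P : Fin n → Prop) [DecidablePred P]
    (e : Fin k ≃ Subtype P) (h : CP n r → ℚ)
    (hloc : ∀ σ σ' : CP n r,
      (∀ p q : Fin n, P p → P q → (σ.1 p < σ.1 q ↔ σ'.1 p < σ'.1 q)) →
      (∀ p : Fin n, P p → σ.2 p = σ'.2 p) → h σ = h σ')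
    (w w₂ : Equiv.Perm (Fin n)) :
    ∑ x : Equiv.Perm (Fin k) × (Fin n → ZMod r),
        h (act (w, x.2) (Equiv.Perm.extendDomain x.1 e))
      = ∑ x : Equiv.Perm (Fin k) × (Fin n → ZMod r),
        h (act (w₂, x.2) (Equiv.Perm.extendDomain x.1 e)) := by
  obtain ⟨u, hu⟩ := exists_patternPerm (fun i => ((e i : Subtype P) : Fin n))
    (fun p q hpq => e.injective (Subtype.ext hpq)) w w₂
  let Ce : (Fin n → ZMod r) ≃ (Fin n → ZMod r) :=
    Equiv.arrowCongr ((Equiv.Perm.extendDomain u⁻¹ e : Equiv.Perm (Fin n)) :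
      Fin n ≃ Fin n).symm (Equiv.refl (ZMod r))
  have hCe : ∀ (c : Fin n → ZMod r) (x : Fin n),
      Ce c x = c (Equiv.Perm.extendDomain u⁻¹ e x) := fun c x => rfl
  refine Fintype.sum_equiv
    (Equiv.prodCongr (Equiv.mulLeft u) Ce) _ _ (fun x => ?_)
  obtain ⟨s, c⟩ := x
  apply hloc
  · intro p q hp hq
    simp only [act, Equiv.Perm.mul_apply, Equiv.prodCongr_apply, Prod.map,
      Equiv.coe_mulLeft]
    rw [Equiv.Perm.extendDomain_apply_subtype _ e hp,
      Equiv.Perm.extendDomain_apply_subtype _ e hq,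
      Equiv.Perm.extendDomain_apply_subtype _ e hp,
      Equiv.Perm.extendDomain_apply_subtype _ e hq]
    simp only [Equiv.Perm.mul_apply]
    exact hu (s (e.symm ⟨p, hp⟩)) (s (e.symm ⟨q, hq⟩))
  · intro p hp
    simp only [act, Equiv.prodCongr_apply, Prod.map, Equiv.coe_mulLeft]
    rw [Equiv.Perm.extendDomain_apply_subtype _ e hp,
      Equiv.Perm.extendDomain_apply_subtype _ e hp, hCe]
    simp only [Equiv.Perm.mul_apply]
    rw [Equiv.Perm.extendDomain_apply_image]
    simp





def eBlockA {n m : ℕ} (hmn : m ≤ n) : Fin m ≃ {x : Fin n // (x : ℕ) < m} where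
  toFun i := ⟨⟨i, lt_of_lt_of_le i.2 hmn⟩, i.2⟩
  invFun x := ⟨x.1, x.2⟩
  left_inv i := rfl
  right_inv x := rfl

def eBlockB {n m : ℕ} : Fin (n - m) ≃ {x : Fin n // m ≤ (x : ℕ)} where
  toFun i := ⟨⟨m + i, by have := i.2; omega⟩, Nat.le_add_right m i⟩
  invFun x := ⟨(x.1 : ℕ) - m, by have := x.1.2; have := x.2; omega⟩
  left_inv i := by apply Fin.ext; simp
  right_inv x := by
    apply Subtype.ext; apply Fin.ext
    have := x.2
    simp only []
    omega

lemma color_split {n r m : ℕ} [NeZero r] (A B : (Fin n → ZMod r) → ℚ)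
    (hA : ∀ c c', (∀ p : Fin n, (p : ℕ) < m → c p = c' p) → A c = A c')
    (hB : ∀ c c', (∀ p : Fin n, m ≤ (p : ℕ) → c p = c' p) → B c = B c') :
    (∑ c, A c * B c) * (r : ℚ) ^ n = (∑ c, A c) * (∑ c, B c) := by
  classical
  let glue : (Fin n → ZMod r) → (Fin n → ZMod r) → (Fin n → ZMod r) :=
    fun c c' p => if (p : ℕ) < m then c p else c' p
  have hglue : ∀ c c', glue (glue c c') (glue c' c) = c := by
    intro c c'
    funext p
    simp only [glue]
    split_ifs <;> rfl
  let Ψ : ((Fin n → ZMod r) × (Fin n → ZMod r)) ≃ ((Fin n → ZMod r) × (Fin n → ZMod r)) :=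
    { toFun := fun x => (glue x.1 x.2, glue x.2 x.1)
      invFun := fun x => (glue x.1 x.2, glue x.2 x.1)
      left_inv := fun x => Prod.ext (hglue x.1 x.2) (hglue x.2 x.1)
      right_inv := fun x => Prod.ext (hglue x.1 x.2) (hglue x.2 x.1) }
  have step1 : (∑ c, A c) * (∑ c, B c)
      = ∑ x : (Fin n → ZMod r) × (Fin n → ZMod r), A (glue x.1 x.2) * B (glue x.1 x.2) := by
    rw [Finset.sum_mul_sum]
    rw [← Finset.sum_product']
    apply Finset.sum_congr rfl
    intro x _
    congr 1
    · apply hA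
      intro p hp
      simp [glue, hp]
    · apply hB
      intro p hp
      have : ¬ ((p : ℕ) < m) := by omega
      simp [glue, this]
  have step2 : ∑ x : (Fin n → ZMod r) × (Fin n → ZMod r), A (glue x.1 x.2) * B (glue x.1 x.2)
      = ∑ x : (Fin n → ZMod r) × (Fin n → ZMod r), A x.1 * B x.1 := by
    rw [← Equiv.sum_comp Ψ (fun x => A (glue x.1 x.2) * B (glue x.1 x.2))]
    apply Finset.sum_congr rfl
    intro x _
    simp only [Ψ, Equiv.coe_fn_mk]
    rw [hglue x.1 x.2]
  have step3 : ∑ x : (Fin n → ZMod r) × (Fin n → ZMod r), A x.1 * B x.1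
      = (∑ c, A c * B c) * (r : ℚ) ^ n := by
    rw [Fintype.sum_prod_type, Finset.sum_mul]
    apply Finset.sum_congr rfl
    intro c _
    show (∑ _y : Fin n → ZMod r, A c * B c) = _
    rw [Finset.sum_const, Finset.card_univ, nsmul_eq_mul]
    have hc : ((Fintype.card (Fin n → ZMod r) : ℕ) : ℚ) = (r : ℚ) ^ n := by
      simp [ZMod.card]
    rw [hc, mul_comm]
  rw [step1, step2, step3]






def pA {n m : ℕ} (hmn : m ≤ n) (s : Equiv.Perm (Fin m)) : Equiv.Perm (Fin n) :=
  s.extendDomain (eBlockA hmn)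

def pB {n m : ℕ} (t : Equiv.Perm (Fin (n - m))) : Equiv.Perm (Fin n) :=
  t.extendDomain (eBlockB (n := n) (m := m))

lemma pA_mem {n m : ℕ} (hmn : m ≤ n) (s : Equiv.Perm (Fin m)) {p : Fin n}
    (hp : (p : ℕ) < m) : ((pA hmn s p : Fin n) : ℕ) < m := by
  rw [pA, Equiv.Perm.extendDomain_apply_subtype s (eBlockA hmn) (b := p) hp]
  exact ((eBlockA hmn) _).2

lemma pA_fix {n m : ℕ} (hmn : m ≤ n) (s : Equiv.Perm (Fin m)) {p : Fin n}
    (hp : m ≤ (p : ℕ)) : pA hmn s p = p :=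
  Equiv.Perm.extendDomain_apply_not_subtype _ _ (by omega)

lemma pB_mem {n m : ℕ} (t : Equiv.Perm (Fin (n - m))) {p : Fin n}
    (hp : m ≤ (p : ℕ)) : m ≤ ((pB t p : Fin n) : ℕ) := by
  rw [pB, Equiv.Perm.extendDomain_apply_subtype t (eBlockB (n := n) (m := m)) (b := p) hp]
  exact ((eBlockB (n := n) (m := m)) _).2

lemma pB_fix {n m : ℕ} (t : Equiv.Perm (Fin (n - m))) {p : Fin n}
    (hp : (p : ℕ) < m) : pB t p = p :=
  Equiv.Perm.extendDomain_apply_not_subtype _ _ (by omega)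

def Qf {n r m : ℕ} [NeZero r] (hmn : m ≤ n) (f : CP n r → ℚ)
    (w : Equiv.Perm (Fin n)) : ℚ :=
  ∑ c : Fin n → ZMod r, ∑ s : Equiv.Perm (Fin m), f (act (w, c) (pA hmn s))

def Qg {n r m : ℕ} [NeZero r] (g : CP n r → ℚ) (w : Equiv.Perm (Fin n)) : ℚ :=
  ∑ c : Fin n → ZMod r, ∑ t : Equiv.Perm (Fin (n - m)), g (act (w, c) (pB t))

lemma Qf_const {n r m : ℕ} [NeZero r] (hmn : m ≤ n) (f : CP n r → ℚ)
    (hf : ∀ σ σ' : CP n r,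
      (∀ p q : Fin n, (p : ℕ) < m → (q : ℕ) < m → (σ.1 p < σ.1 q ↔ σ'.1 p < σ'.1 q)) →
      (∀ p : Fin n, (p : ℕ) < m → σ.2 p = σ'.2 p) → f σ = f σ')
    (w : Equiv.Perm (Fin n)) : Qf hmn f w = Qf hmn f 1 := by
  have halt : ∀ w' : Equiv.Perm (Fin n), Qf hmn f w'
      = ∑ x : Equiv.Perm (Fin m) × (Fin n → ZMod r),
          f (act (w', x.2) (Equiv.Perm.extendDomain x.1 (eBlockA hmn))) := by
    intro w'
    rw [Fintype.sum_prod_type]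
    exact Finset.sum_comm
  rw [halt w, halt 1]
  exact phi_const (fun x : Fin n => (x : ℕ) < m) (eBlockA hmn) f hf w 1

lemma Qg_const {n r m : ℕ} [NeZero r] (g : CP n r → ℚ)
    (hg : ∀ σ σ' : CP n r,
      (∀ p q : Fin n, m ≤ (p : ℕ) → m ≤ (q : ℕ) → (σ.1 p < σ.1 q ↔ σ'.1 p < σ'.1 q)) →
      (∀ p : Fin n, m ≤ (p : ℕ) → σ.2 p = σ'.2 p) → g σ = g σ')
    (w : Equiv.Perm (Fin n)) : Qg (m := m) g w = Qg (m := m) g 1 := by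
  have halt : ∀ w' : Equiv.Perm (Fin n), Qg (m := m) g w'
      = ∑ x : Equiv.Perm (Fin (n - m)) × (Fin n → ZMod r),
          g (act (w', x.2) (Equiv.Perm.extendDomain x.1 (eBlockB (n := n) (m := m)))) := by
    intro w'
    rw [Fintype.sum_prod_type]
    exact Finset.sum_comm
  rw [halt w, halt 1]
  exact phi_const (fun x : Fin n => m ≤ (x : ℕ)) (eBlockB (n := n) (m := m)) g hg w 1

lemma Qf_marginal {n r m : ℕ} [NeZero r] (hmn : m ≤ n) (f : CP n r → ℚ) :
    ∑ w : Equiv.Perm (Fin n), Qf hmn f w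
      = (Nat.factorial m : ℚ) * ∑ σ : CP n r, f σ := by
  calc ∑ w : Equiv.Perm (Fin n), Qf hmn f w
      = ∑ w : Equiv.Perm (Fin n), ∑ s : Equiv.Perm (Fin m), ∑ c : Fin n → ZMod r,
          f (act (w, c) (pA hmn s)) :=
        Finset.sum_congr rfl fun w _ => Finset.sum_comm
    _ = ∑ s : Equiv.Perm (Fin m), ∑ w : Equiv.Perm (Fin n), ∑ c : Fin n → ZMod r,
          f (act (w, c) (pA hmn s)) := Finset.sum_comm
    _ = ∑ s : Equiv.Perm (Fin m), ∑ σ : CP n r, f (act σ (pA hmn s)) :=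
        Finset.sum_congr rfl fun s _ =>
          (Fintype.sum_prod_type (f := fun σ : CP n r => f (act σ (pA hmn s)))).symm
    _ = ∑ s : Equiv.Perm (Fin m), ∑ σ : CP n r, f σ :=
        Finset.sum_congr rfl fun s _ => sum_act (pA hmn s) f
    _ = (Nat.factorial m : ℚ) * ∑ σ : CP n r, f σ := by
        rw [Finset.sum_const, Finset.card_univ, Fintype.card_perm, Fintype.card_fin,
          nsmul_eq_mul]

lemma Qg_marginal {n r m : ℕ} [NeZero r] (g : CP n r → ℚ) :
    ∑ w : Equiv.Perm (Fin n), Qg (m := m) g w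
      = (Nat.factorial (n - m) : ℚ) * ∑ σ : CP n r, g σ := by
  calc ∑ w : Equiv.Perm (Fin n), Qg (m := m) g w
      = ∑ w : Equiv.Perm (Fin n), ∑ t : Equiv.Perm (Fin (n - m)), ∑ c : Fin n → ZMod r,
          g (act (w, c) (pB t)) :=
        Finset.sum_congr rfl fun w _ => Finset.sum_comm
    _ = ∑ t : Equiv.Perm (Fin (n - m)), ∑ w : Equiv.Perm (Fin n), ∑ c : Fin n → ZMod r,
          g (act (w, c) (pB t)) := Finset.sum_comm
    _ = ∑ t : Equiv.Perm (Fin (n - m)), ∑ σ : CP n r, g (act σ (pB t)) :=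
        Finset.sum_congr rfl fun t _ =>
          (Fintype.sum_prod_type (f := fun σ : CP n r => g (act σ (pB t)))).symm
    _ = ∑ t : Equiv.Perm (Fin (n - m)), ∑ σ : CP n r, g σ :=
        Finset.sum_congr rfl fun t _ => sum_act (pB t) g
    _ = (Nat.factorial (n - m) : ℚ) * ∑ σ : CP n r, g σ := by
        rw [Finset.sum_const, Finset.card_univ, Fintype.card_perm, Fintype.card_fin,
          nsmul_eq_mul]





theorem indep_general {n r m : ℕ} [NeZero r] (hmn : m ≤ n)
    (f g : CP n r → ℚ)
    (hf : ∀ σ σ' : CP n r,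
      (∀ p q : Fin n, (p : ℕ) < m → (q : ℕ) < m → (σ.1 p < σ.1 q ↔ σ'.1 p < σ'.1 q)) →
      (∀ p : Fin n, (p : ℕ) < m → σ.2 p = σ'.2 p) → f σ = f σ')
    (hg : ∀ σ σ' : CP n r,
      (∀ p q : Fin n, m ≤ (p : ℕ) → m ≤ (q : ℕ) → (σ.1 p < σ.1 q ↔ σ'.1 p < σ'.1 q)) →
      (∀ p : Fin n, m ≤ (p : ℕ) → σ.2 p = σ'.2 p) → g σ = g σ') :
    (∑ σ : CP n r, f σ) * (∑ σ : CP n r, g σ)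
      = ((Nat.factorial n : ℚ) * (r : ℚ) ^ n) * ∑ σ : CP n r, f σ * g σ := by
  classical
  have hsplit_f : ∀ (σ : CP n r) (s : Equiv.Perm (Fin m)) (t : Equiv.Perm (Fin (n - m))),
      f (act σ (pA hmn s * pB t)) = f (act σ (pA hmn s)) := by
    intro σ s t
    apply hf
    · intro p q hp hq
      simp only [act, Equiv.Perm.mul_apply]
      rw [pB_fix t hp, pB_fix t hq]
    · intro p hp
      simp only [act, Equiv.Perm.mul_apply]
      rw [pB_fix t hp]
  have hsplit_g : ∀ (σ : CP n r) (s : Equiv.Perm (Fin m)) (t : Equiv.Perm (Fin (n - m))),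
      g (act σ (pA hmn s * pB t)) = g (act σ (pB t)) := by
    intro σ s t
    apply hg
    · intro p q hp hq
      simp only [act, Equiv.Perm.mul_apply]
      rw [pA_fix hmn s (pB_mem t hp), pA_fix hmn s (pB_mem t hq)]
    · intro p hp
      simp only [act, Equiv.Perm.mul_apply]
      rw [pA_fix hmn s (pB_mem t hp)]
  -- Step 1 : the key averaged identity
  have key1 : ∑ σ : CP n r,
      (∑ s : Equiv.Perm (Fin m), f (act σ (pA hmn s)))
        * (∑ t : Equiv.Perm (Fin (n - m)), g (act σ (pB t)))
      = (Nat.factorial m : ℚ) * (Nat.factorial (n - m) : ℚ) * ∑ σ : CP n r, f σ * g σ := by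
    have h1 : ∀ σ : CP n r,
        (∑ s : Equiv.Perm (Fin m), f (act σ (pA hmn s)))
          * (∑ t : Equiv.Perm (Fin (n - m)), g (act σ (pB t)))
        = ∑ s : Equiv.Perm (Fin m), ∑ t : Equiv.Perm (Fin (n - m)),
            f (act σ (pA hmn s * pB t)) * g (act σ (pA hmn s * pB t)) := by
      intro σ
      rw [Finset.sum_mul_sum]
      exact Finset.sum_congr rfl fun s _ => Finset.sum_congr rfl fun t _ => by
        rw [hsplit_f σ s t, hsplit_g σ s t]
    calc ∑ σ : CP n r, (∑ s : Equiv.Perm (Fin m), f (act σ (pA hmn s)))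
          * (∑ t : Equiv.Perm (Fin (n - m)), g (act σ (pB t)))
        = ∑ σ : CP n r, ∑ s : Equiv.Perm (Fin m), ∑ t : Equiv.Perm (Fin (n - m)),
            f (act σ (pA hmn s * pB t)) * g (act σ (pA hmn s * pB t)) :=
          Finset.sum_congr rfl fun σ _ => h1 σ
      _ = ∑ s : Equiv.Perm (Fin m), ∑ σ : CP n r, ∑ t : Equiv.Perm (Fin (n - m)),
            f (act σ (pA hmn s * pB t)) * g (act σ (pA hmn s * pB t)) := Finset.sum_comm
      _ = ∑ s : Equiv.Perm (Fin m), ∑ t : Equiv.Perm (Fin (n - m)), ∑ σ : CP n r,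
            f (act σ (pA hmn s * pB t)) * g (act σ (pA hmn s * pB t)) :=
          Finset.sum_congr rfl fun s _ => Finset.sum_comm
      _ = ∑ _s : Equiv.Perm (Fin m), ∑ _t : Equiv.Perm (Fin (n - m)), ∑ σ : CP n r,
            f σ * g σ :=
          Finset.sum_congr rfl fun s _ => Finset.sum_congr rfl fun t _ =>
            sum_act (pA hmn s * pB t) (fun σ => f σ * g σ)
      _ = (Nat.factorial m : ℚ) * (Nat.factorial (n - m) : ℚ) * ∑ σ : CP n r, f σ * g σ := by
          rw [Finset.sum_const, Finset.sum_const, Finset.card_univ, Finset.card_univ,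
            Fintype.card_perm, Fintype.card_perm, Fintype.card_fin, Fintype.card_fin,
            nsmul_eq_mul, nsmul_eq_mul]
          ring
  -- Step 2 : color decoupling pointwise in w
  have key2 : ∀ w : Equiv.Perm (Fin n),
      (∑ c : Fin n → ZMod r,
        (∑ s : Equiv.Perm (Fin m), f (act (w, c) (pA hmn s)))
          * (∑ t : Equiv.Perm (Fin (n - m)), g (act (w, c) (pB t)))) * (r : ℚ) ^ n
      = Qf hmn f w * Qg (m := m) g w := by
    intro w
    exact color_split (m := m)
      (fun c => ∑ s : Equiv.Perm (Fin m), f (act (w, c) (pA hmn s)))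
      (fun c => ∑ t : Equiv.Perm (Fin (n - m)), g (act (w, c) (pB t)))
      (by
        intro c c' hcc
        refine Finset.sum_congr rfl fun s _ => ?_
        apply hf
        · intro p q hp hq
          exact Iff.rfl
        · intro p hp
          simp only [act]
          exact hcc _ (pA_mem hmn s hp))
      (by
        intro c c' hcc
        refine Finset.sum_congr rfl fun t _ => ?_
        apply hg
        · intro p q hp hq
          exact Iff.rfl
        · intro p hp
          simp only [act]
          exact hcc _ (pB_mem t hp))
  -- Step 3 : assemble
  have keyA : ((Nat.factorial m : ℚ) * (Nat.factorial (n - m) : ℚ)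
        * ∑ σ : CP n r, f σ * g σ) * (r : ℚ) ^ n
      = (Nat.factorial n : ℚ) * (Qf hmn f 1 * Qg (m := m) g 1) := by
    rw [← key1, Fintype.sum_prod_type (f := fun σ : CP n r =>
      (∑ s : Equiv.Perm (Fin m), f (act σ (pA hmn s)))
        * (∑ t : Equiv.Perm (Fin (n - m)), g (act σ (pB t)))), Finset.sum_mul]
    calc ∑ w : Equiv.Perm (Fin n), (∑ c : Fin n → ZMod r,
          (∑ s : Equiv.Perm (Fin m), f (act (w, c) (pA hmn s)))
            * (∑ t : Equiv.Perm (Fin (n - m)), g (act (w, c) (pB t)))) * (r : ℚ) ^ n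
        = ∑ w : Equiv.Perm (Fin n), Qf hmn f w * Qg (m := m) g w :=
          Finset.sum_congr rfl fun w _ => key2 w
      _ = ∑ _w : Equiv.Perm (Fin n), Qf hmn f 1 * Qg (m := m) g 1 :=
          Finset.sum_congr rfl fun w _ => by rw [Qf_const hmn f hf w, Qg_const g hg w]
      _ = (Nat.factorial n : ℚ) * (Qf hmn f 1 * Qg (m := m) g 1) := by
          rw [Finset.sum_const, Finset.card_univ, Fintype.card_perm, Fintype.card_fin,
            nsmul_eq_mul]
  have keyC : (Nat.factorial m : ℚ) * ∑ σ : CP n r, f σ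
      = (Nat.factorial n : ℚ) * Qf hmn f 1 := by
    rw [← Qf_marginal hmn f]
    calc ∑ w : Equiv.Perm (Fin n), Qf hmn f w
        = ∑ _w : Equiv.Perm (Fin n), Qf hmn f 1 :=
          Finset.sum_congr rfl fun w _ => Qf_const hmn f hf w
      _ = (Nat.factorial n : ℚ) * Qf hmn f 1 := by
          rw [Finset.sum_const, Finset.card_univ, Fintype.card_perm, Fintype.card_fin,
            nsmul_eq_mul]
  have keyD : (Nat.factorial (n - m) : ℚ) * ∑ σ : CP n r, g σ
      = (Nat.factorial n : ℚ) * Qg (m := m) g 1 := by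
    rw [← Qg_marginal (m := m) g]
    calc ∑ w : Equiv.Perm (Fin n), Qg (m := m) g w
        = ∑ _w : Equiv.Perm (Fin n), Qg (m := m) g 1 :=
          Finset.sum_congr rfl fun w _ => Qg_const g hg w
      _ = (Nat.factorial n : ℚ) * Qg (m := m) g 1 := by
          rw [Finset.sum_const, Finset.card_univ, Fintype.card_perm, Fintype.card_fin,
            nsmul_eq_mul]
  -- final algebra
  have hm0 : (Nat.factorial m : ℚ) ≠ 0 := Nat.cast_ne_zero.mpr (Nat.factorial_ne_zero m)
  have hk0 : (Nat.factorial (n - m) : ℚ) ≠ 0 := Nat.cast_ne_zero.mpr (Nat.factorial_ne_zero _)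
  apply mul_left_cancel₀ (mul_ne_zero hm0 hk0)
  calc (Nat.factorial m : ℚ) * (Nat.factorial (n - m) : ℚ)
        * ((∑ σ : CP n r, f σ) * ∑ σ : CP n r, g σ)
      = ((Nat.factorial m : ℚ) * ∑ σ : CP n r, f σ)
        * ((Nat.factorial (n - m) : ℚ) * ∑ σ : CP n r, g σ) := by ring
    _ = ((Nat.factorial n : ℚ) * Qf hmn f 1) * ((Nat.factorial n : ℚ) * Qg (m := m) g 1) := by
        rw [keyC, keyD]
    _ = (Nat.factorial n : ℚ) * ((Nat.factorial n : ℚ) * (Qf hmn f 1 * Qg (m := m) g 1)) := by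
        ring
    _ = (Nat.factorial n : ℚ) * (((Nat.factorial m : ℚ) * (Nat.factorial (n - m) : ℚ)
          * ∑ σ : CP n r, f σ * g σ) * (r : ℚ) ^ n) := by rw [keyA]
    _ = (Nat.factorial m : ℚ) * (Nat.factorial (n - m) : ℚ)
        * ((Nat.factorial n : ℚ) * (r : ℚ) ^ n * ∑ σ : CP n r, f σ * g σ) := by ring




lemma prodX_local {n r m j : ℕ} (hmn : m ≤ n) (a : Fin j → Fin n)
    (ha : ∀ i, (a i : ℕ) + 1 < m) (σ σ' : CP n r)
    (hord : ∀ p q : Fin n, (p : ℕ) < m → (q : ℕ) < m → (σ.1 p < σ.1 q ↔ σ'.1 p < σ'.1 q))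
    (hcol : ∀ p : Fin n, (p : ℕ) < m → σ.2 p = σ'.2 p) :
    ∏ i, X (a i) σ = ∏ i, X (a i) σ' := by
  apply Finset.prod_congr rfl
  intro i _
  have h1 : ((a i : ℕ) + 1) < n := lt_of_lt_of_le (ha i) hmn
  have hlt : (a i : ℕ) < m := Nat.lt_of_succ_lt (ha i)
  have hd : IsDescent σ (a i) ↔ IsDescent σ' (a i) := by
    unfold IsDescent
    rw [dif_pos h1, dif_pos h1]
    have e1 : σ.2 ⟨(a i : ℕ) + 1, h1⟩ = σ'.2 ⟨(a i : ℕ) + 1, h1⟩ := hcol _ (ha i)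
    have e2 : σ.2 (a i) = σ'.2 (a i) := hcol _ hlt
    rw [e1, e2, hord ⟨(a i : ℕ) + 1, h1⟩ (a i) (ha i) hlt]
  unfold X
  exact if_congr hd rfl rfl

lemma prodXtail_local {n r m : ℕ} (σ σ' : CP n r)
    (hord : ∀ p q : Fin n, m ≤ (p : ℕ) → m ≤ (q : ℕ) → (σ.1 p < σ.1 q ↔ σ'.1 p < σ'.1 q))
    (hcol : ∀ p : Fin n, m ≤ (p : ℕ) → σ.2 p = σ'.2 p) :
    ∏ i ∈ Finset.univ.filter (fun i : Fin n => m ≤ (i : ℕ)), X i σ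
      = ∏ i ∈ Finset.univ.filter (fun i : Fin n => m ≤ (i : ℕ)), X i σ' := by
  apply Finset.prod_congr rfl
  intro i hi
  rw [Finset.mem_filter] at hi
  have him : m ≤ (i : ℕ) := hi.2
  have hd : IsDescent σ i ↔ IsDescent σ' i := by
    unfold IsDescent
    by_cases h1 : (i : ℕ) + 1 < n
    · rw [dif_pos h1, dif_pos h1]
      have him1 : m ≤ (i : ℕ) + 1 := le_trans him (Nat.le_succ _)
      have e1 : σ.2 ⟨(i : ℕ) + 1, h1⟩ = σ'.2 ⟨(i : ℕ) + 1, h1⟩ := hcol _ him1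
      have e2 : σ.2 i = σ'.2 i := hcol _ him
      rw [e1, e2, hord ⟨(i : ℕ) + 1, h1⟩ i him1 him]
    · rw [dif_neg h1, dif_neg h1, hcol _ him]
  unfold X
  exact if_congr hd rfl rfl

end ColoredPerm

open ColoredPerm in
theorem descent_tail_independent (n r m j : ℕ) [NeZero r] (hmn : m ≤ n)
    (a : Fin j → Fin n) (ha : ∀ i, (a i : ℕ) + 1 < m) :
    E Finset.univ (fun σ : CP n r =>
        (∏ i, X (a i) σ) *
          ∏ i ∈ Finset.univ.filter (fun i : Fin n => m ≤ (i : ℕ)), X i σ) =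
      E Finset.univ (fun σ : CP n r => ∏ i, X (a i) σ) *
        E Finset.univ (fun σ : CP n r =>
          ∏ i ∈ Finset.univ.filter (fun i : Fin n => m ≤ (i : ℕ)), X i σ) := by
  classical
  have hgen := indep_general (r := r) hmn
    (fun σ : CP n r => ∏ i, X (a i) σ)
    (fun σ : CP n r => ∏ i ∈ Finset.univ.filter (fun i : Fin n => m ≤ (i : ℕ)), X i σ)
    (fun σ σ' hord hcol => prodX_local hmn a ha σ σ' hord hcol)
    (fun σ σ' hord hcol => prodXtail_local σ σ' hord hcol)
  have hcard : (((Finset.univ : Finset (CP n r)).card : ℕ) : ℚ)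
      = (Nat.factorial n : ℚ) * (r : ℚ) ^ n := by
    rw [Finset.card_univ]
    rw [show Fintype.card (CP n r)
        = Fintype.card (Equiv.Perm (Fin n)) * Fintype.card (Fin n → ZMod r) from
      Fintype.card_prod _ _]
    rw [Fintype.card_perm, Fintype.card_fin]
    have : Fintype.card (Fin n → ZMod r) = r ^ n := by
      rw [Fintype.card_fun, ZMod.card, Fintype.card_fin]
    rw [this]
    push_cast
    ring
  have hN0 : (((Finset.univ : Finset (CP n r)).card : ℕ) : ℚ) ≠ 0 := by
    rw [hcard]
    have hr : (r : ℚ) ≠ 0 := Nat.cast_ne_zero.mpr (NeZero.ne r)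
    exact mul_ne_zero (Nat.cast_ne_zero.mpr (Nat.factorial_ne_zero n)) (pow_ne_zero n hr)
  have hprod : (∑ σ : CP n r, ∏ i, X (a i) σ)
        * (∑ σ : CP n r, ∏ i ∈ Finset.univ.filter (fun i : Fin n => m ≤ (i : ℕ)), X i σ)
      = (((Finset.univ : Finset (CP n r)).card : ℕ) : ℚ)
        * ∑ σ : CP n r, (∏ i, X (a i) σ)
            * ∏ i ∈ Finset.univ.filter (fun i : Fin n => m ≤ (i : ℕ)), X i σ := by
    rw [hcard]
    exact hgen
  unfold E
  beta_reduce
  rw [div_mul_div_comm, hprod, mul_div_mul_left _ _ hN0]
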